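/- The map F : 𝕋² → ℝ³ given by F(x,y) = (cos(2π(x+y)), cos(2πx), cos(2πy)) semiconjugates the linear toral automorphism induced by A_a = [[a,1],[1,0]] with the trace map T_a = Gᵃ∘H restricted to its image, where G(x₁,x₂,x₃) = (2x₁x₃ − x₂, x₁, x₃) and H(x₁,x₂,x₃) = (x₁,x₃,x₂). That is, F ∘ Â_a = T_a ∘ F, where Â_a is the map on 𝕋² = ℝ²/ℤ² induced by A_a. -/
import Mathlib


/-- `G(x₁,x₂,x₃) = (2x₁x₃ − x₂, x₁, x₃)`. -/
def Gmap : ℝ × ℝ × ℝ → ℝ × ℝ × ℝ := fun p => (2 * p.1 * p.2.2 - p.2.1, p.1, p.2.2)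

/-- `H(x₁,x₂,x₃) = (x₁, x₃, x₂)`. -/
def Hmap : ℝ × ℝ × ℝ → ℝ × ℝ × ℝ := fun p => (p.1, p.2.2, p.2.1)

/-- The trace map `T_a = Gᵃ ∘ H`. -/
def Tmap (a : ℕ) : ℝ × ℝ × ℝ → ℝ × ℝ × ℝ := Gmap^[a] ∘ Hmap

/-- The semiconjugacy `F(x,y) = (cos 2π(x+y), cos 2πx, cos 2πy)`, written on `ℝ²`. -/
noncomputable def Fmap : ℝ × ℝ → ℝ × ℝ × ℝ := fun q =>
  (Real.cos (2 * Real.pi * (q.1 + q.2)), Real.cos (2 * Real.pi * q.1),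
    Real.cos (2 * Real.pi * q.2))

lemma cos_per (x : ℝ) (m : ℤ) : Real.cos (2 * Real.pi * (x + m)) = Real.cos (2 * Real.pi * x) := by
  have : 2 * Real.pi * (x + m) = 2 * Real.pi * x + m * (2 * Real.pi) := by ring
  rw [this, Real.cos_add_int_mul_two_pi]

lemma key (x y : ℝ) : ∀ k : ℕ,
    Gmap^[k] (Real.cos (2*Real.pi*(x+y)), Real.cos (2*Real.pi*y), Real.cos (2*Real.pi*x)) =
    (Real.cos (2*Real.pi*((k+1)*x+y)), Real.cos (2*Real.pi*(k*x+y)), Real.cos (2*Real.pi*x)) := by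
  intro k
  induction k with
  | zero => norm_num
  | succ k ih =>
      rw [Function.iterate_succ_apply', ih]
      simp only [Gmap]
      have h1 := Real.cos_add (2*Real.pi*((k+1)*x+y)) (2*Real.pi*x)
      have h2 := Real.cos_sub (2*Real.pi*((k+1)*x+y)) (2*Real.pi*x)
      have e1 : 2*Real.pi*((k+1)*x+y) + 2*Real.pi*x = 2*Real.pi*(((k:ℝ)+1+1)*x+y) := by ring
      have e2 : 2*Real.pi*((k+1)*x+y) - 2*Real.pi*x = 2*Real.pi*((k:ℝ)*x+y) := by ring
      rw [e1] at h1; rw [e2] at h2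
      refine Prod.ext ?_ (Prod.ext ?_ rfl)
      · push_cast
        nlinarith [h1, h2]
      · push_cast; ring_nf

/-- `F` is `ℤ²`-periodic (hence induces a map on `𝕋² = ℝ²/ℤ²`) and
semiconjugates the toral automorphism `Â_a(x,y) = (ax+y, x) mod ℤ²` induced by
`A_a = [[a,1],[1,0]]` with the trace map `T_a`: `F ∘ Â_a = T_a ∘ F`. -/
theorem stmt6 (a : ℕ) (ha : 1 ≤ a) :
    (∀ (x y : ℝ) (m n : ℤ), Fmap (x + m, y + n) = Fmap (x, y)) ∧
    (∀ x y : ℝ, Fmap ((a : ℝ) * x + y, x) = Tmap a (Fmap (x, y))) := by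
  constructor
  · intro x y m n
    simp only [Fmap]
    have : x + m + (y + n) = (x + y) + ((m + n : ℤ) : ℝ) := by push_cast; ring
    rw [this, cos_per (x+y) (m+n), cos_per x m, cos_per y n]
  · intro x y
    simp only [Tmap, Function.comp_apply, Fmap, Hmap]
    rw [key x y a]
    refine Prod.ext ?_ (Prod.ext ?_ rfl)
    · show Real.cos (2*Real.pi*((a:ℝ)*x+y+x)) = _
      ring_nf
    · show Real.cos (2*Real.pi*((a:ℝ)*x+y)) = _
      ring_nf
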